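/- Let P and Q be probability measures on a measurable space Ω. Then KL(P‖Q) = sup over all bounded measurable functions T : Ω → ℝ of (∫ T dP − ∫ e^{T−1} dQ), where the supremum is taken in the extended reals. (Variational f-divergence representation of the KL divergence via the conjugate t ↦ e^{t−1}.) -/

import Mathlib

open MeasureTheory Real
open scoped Classical

/-- The Kullback–Leibler divergence between two measures, valued in the extended reals,
matching Mathlib's `klDiv`: it is `∫ log (dP/dQ) dP` if `P ≪ Q` and the log-likelihood
ratio is `P`-integrable, and `⊤` otherwise. -/

noncomputable def klDiv {Ω : Type*} [MeasurableSpace Ω] (P Q : Measure Ω) : EReal :=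
  if P ≪ Q ∧ Integrable (llr P Q) P then ((∫ x, llr P Q x ∂P : ℝ) : EReal) else ⊤

private lemma nwj_conj {a t : ℝ} (ha : 0 ≤ a) : t * a - Real.exp (t - 1) ≤ a * Real.log a := by
  rcases ha.lt_or_eq with h | h
  · have h1 : t - Real.log a - 1 + 1 ≤ Real.exp (t - Real.log a - 1) := Real.add_one_le_exp _
    have h2 : a * (t - Real.log a) ≤ a * Real.exp (t - Real.log a - 1) :=
      mul_le_mul_of_nonneg_left (by linarith) ha
    have h3 : a * Real.exp (t - Real.log a - 1) = Real.exp (t - 1) := by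
      rw [show t - Real.log a - 1 = (t - 1) + -Real.log a by ring, Real.exp_add,
        Real.exp_neg, Real.exp_log h]
      field_simp
    nlinarith
  · simp [← h, (Real.exp_pos (t - 1)).le]

private lemma nwj_abs_clamp (a n : ℝ) (hn : 0 ≤ n) : |max (min a n) (-n)| ≤ |a| := by
  rcases le_total a 0 with h | h
  · rw [min_eq_left (h.trans hn)]
    rcases le_total a (-n) with h2 | h2
    · rw [max_eq_right h2, abs_of_nonpos (by linarith), abs_of_nonpos h]; linarith
    · rw [max_eq_left h2]
  · have h1 : -n ≤ min a n := le_min (by linarith) (by linarith)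
    rw [max_eq_left h1, abs_of_nonneg (le_min h hn), abs_of_nonneg h]
    exact min_le_left _ _

private lemma nwj_clamp_ge {a n : ℝ} (hn : 0 ≤ n) :
    min (max a 0) n - max (-a) 0 ≤ max (min a n) (-n) := by
  rcases le_total a 0 with h | h
  · rw [max_eq_right h, max_eq_left (by linarith), min_eq_left hn,
      min_eq_left (h.trans hn)]
    have := le_max_left a (-n); linarith
  · rw [max_eq_left h, max_eq_right (by linarith)]
    have := le_max_left (min a n) (-n); linarith

private lemma nwj_xlog {a : ℝ} (ha : 0 ≤ a) : a * max (-Real.log a) 0 ≤ 1 := by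
  rcases ha.lt_or_eq with h | h
  · rcases le_total (Real.log a) 0 with hl | hl
    · rw [max_eq_left (by linarith)]
      have h2 : Real.log a⁻¹ ≤ a⁻¹ - 1 := Real.log_le_sub_one_of_pos (inv_pos.mpr h)
      rw [Real.log_inv] at h2
      have h4 := mul_le_mul_of_nonneg_left h2 ha
      have h3 : a * a⁻¹ = 1 := mul_inv_cancel₀ h.ne'
      nlinarith
    · rw [max_eq_right (by linarith), mul_zero]; exact zero_le_one
  · simp [← h]

private lemma nwj_int_of_bdd {Ω : Type*} [MeasurableSpace Ω] {μ : Measure Ω} [IsFiniteMeasure μ]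
    {f : Ω → ℝ} (hf : Measurable f) {C : ℝ} (hC : ∀ x, |f x| ≤ C) : Integrable f μ :=
  (integrable_const C).mono' hf.aestronglyMeasurable (Filter.Eventually.of_forall fun x => by
    simpa [Real.norm_eq_abs] using hC x)

private lemma nwj_top {S : EReal} {v : ℕ → ℝ} (hv : Filter.Tendsto v Filter.atTop Filter.atTop)
    (hle : ∀ n, ((v n : ℝ) : EReal) ≤ S) : S = ⊤ := by
  have h : Filter.Tendsto (fun n => ((v n : ℝ) : EReal)) Filter.atTop (nhds ⊤) := by
    rw [EReal.tendsto_nhds_top_iff_real]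
    intro x
    filter_upwards [hv.eventually_gt_atTop x] with n hn
    exact EReal.coe_lt_coe_iff.mpr hn
  exact top_le_iff.mp (le_of_tendsto h (Filter.Eventually.of_forall hle))

/-- Variational f-divergence representation of the KL divergence via the conjugate
`t ↦ e^{t−1}`: `KL(P‖Q)` equals the supremum over all bounded measurable `T : Ω → ℝ` of
`∫ T dP − ∫ e^{T−1} dQ`, in the extended reals. -/
theorem nwj_representation {Ω : Type*} [MeasurableSpace Ω]
    (P Q : Measure Ω) [IsProbabilityMeasure P] [IsProbabilityMeasure Q] :
    klDiv P Q = ⨆ T : {T : Ω → ℝ // Measurable T ∧ ∃ C : ℝ, ∀ x, |T x| ≤ C},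
      ((∫ x, T.1 x ∂P - ∫ x, Real.exp (T.1 x - 1) ∂Q : ℝ) : EReal) := by
  set S := ⨆ T : {T : Ω → ℝ // Measurable T ∧ ∃ C : ℝ, ∀ x, |T x| ≤ C},
      ((∫ x, T.1 x ∂P - ∫ x, Real.exp (T.1 x - 1) ∂Q : ℝ) : EReal) with hS_def
  set r : Ω → ℝ := fun x => (P.rnDeriv Q x).toReal with hr_def
  have hllr : llr P Q = fun x => Real.log (r x) := rfl
  have hr_meas : Measurable r := (Measure.measurable_rnDeriv P Q).ennreal_toReal
  have hr_nonneg : ∀ x, 0 ≤ r x := fun x => ENNReal.toReal_nonneg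
  have hr_int : Integrable r Q := Measure.integrable_toReal_rnDeriv
  have hle_S : ∀ (f : Ω → ℝ), Measurable f → ∀ (C : ℝ), (∀ x, |f x| ≤ C) →
      ((∫ x, f x ∂P - ∫ x, Real.exp (f x - 1) ∂Q : ℝ) : EReal) ≤ S := by
    intro f hf C hC
    rw [hS_def]
    exact le_iSup (fun T : {T : Ω → ℝ // Measurable T ∧ ∃ C : ℝ, ∀ x, |T x| ≤ C} =>
      ((∫ x, T.1 x ∂P - ∫ x, Real.exp (T.1 x - 1) ∂Q : ℝ) : EReal)) ⟨f, hf, C, hC⟩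
  by_cases hac : P ≪ Q
  · set g : ℕ → Ω → ℝ := fun n x =>
      if r x = 0 then -(n : ℝ) else max (min (Real.log (r x) + 1) n) (-(n : ℝ)) with hg_def
    have hg_meas : ∀ n, Measurable (g n) := fun n =>
      Measurable.ite (hr_meas (measurableSet_singleton 0)) measurable_const
        (((hr_meas.log.add measurable_const).min measurable_const).max measurable_const)
    have hg_bdd : ∀ (n : ℕ) (x : Ω), |g n x| ≤ (n : ℝ) := by
      intro n x
      simp only [hg_def]
      split_ifs with h
      · simp
      · refine abs_le.mpr ⟨le_max_right _ _, max_le (min_le_right _ _) ?_⟩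
        exact neg_le_self (Nat.cast_nonneg n)
    have hr_pos : ∀ᵐ x ∂P, 0 < r x := by
      filter_upwards [Measure.rnDeriv_pos hac, hac.ae_le (Measure.rnDeriv_lt_top P Q)]
        with x h1 h2
      exact ENNReal.toReal_pos h1.ne' h2.ne
    have hexp_bdd : ∀ (n : ℕ) (x : Ω), Real.exp (g n x - 1) ≤ r x + Real.exp (-1) := by
      intro n x
      have hn0 : (0:ℝ) ≤ n := Nat.cast_nonneg n
      simp only [hg_def]
      split_ifs with h
      · have h1 : Real.exp (-(n:ℝ) - 1) ≤ Real.exp (-1) :=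
          Real.exp_le_exp.mpr (by linarith)
        linarith [hr_nonneg x]
      · rcases max_cases (min (Real.log (r x) + 1) (n:ℝ)) (-(n:ℝ)) with ⟨heq, -⟩ | ⟨heq, -⟩ <;>
          rw [heq]
        · have h1 : min (Real.log (r x) + 1) (n:ℝ) - 1 ≤ Real.log (r x) := by
            have := min_le_left (Real.log (r x) + 1) (n:ℝ); linarith
          have h2 : Real.exp (min (Real.log (r x) + 1) (n:ℝ) - 1) ≤ r x :=
            (Real.exp_le_exp.mpr h1).trans_eq
              (Real.exp_log ((hr_nonneg x).lt_of_ne (Ne.symm h)))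
          linarith [(Real.exp_pos (-1:ℝ)).le]
        · have h1 : Real.exp (-(n:ℝ) - 1) ≤ Real.exp (-1) := Real.exp_le_exp.mpr (by linarith)
          linarith [hr_nonneg x]
    have hexp_tendsto : ∀ x, Filter.Tendsto (fun n : ℕ => Real.exp (g n x - 1))
        Filter.atTop (nhds (r x)) := by
      intro x
      by_cases h : r x = 0
      · have h1 : (fun n : ℕ => Real.exp (g n x - 1))
            = fun n : ℕ => Real.exp (-(n:ℝ) - 1) := by
          funext n; simp only [hg_def, if_pos h]
        rw [h1, h]
        have h3 : Filter.Tendsto (fun n : ℕ => -(n:ℝ)) Filter.atTop Filter.atBot :=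
          Filter.tendsto_neg_atTop_atBot.comp tendsto_natCast_atTop_atTop
        have h2 := Filter.Tendsto.congr (fun n : ℕ => by ring :
            ∀ n : ℕ, -(n:ℝ) + -1 = -(n:ℝ) - 1)
          (Filter.tendsto_atBot_add_const_right Filter.atTop (-1 : ℝ) h3)
        exact Real.tendsto_exp_atBot.comp h2
      · have hev : ∀ᶠ n : ℕ in Filter.atTop, Real.exp (g n x - 1) = r x := by
          filter_upwards [Filter.eventually_ge_atTop ⌈|Real.log (r x) + 1|⌉₊] with n hn
          have hn' : |Real.log (r x) + 1| ≤ (n:ℝ) := Nat.ceil_le.mp hn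
          have h1 : Real.log (r x) + 1 ≤ (n:ℝ) := (le_abs_self _).trans hn'
          have h2 : -(n:ℝ) ≤ Real.log (r x) + 1 := by
            have := neg_abs_le (Real.log (r x) + 1); linarith
          simp only [hg_def, if_neg h]
          rw [min_eq_left h1, max_eq_left h2, add_sub_cancel_right,
            Real.exp_log ((hr_nonneg x).lt_of_ne (Ne.symm h))]
        exact Filter.Tendsto.congr' (by filter_upwards [hev] with n hn using hn.symm)
          tendsto_const_nhds
    have hexpQ_int : ∀ n : ℕ, Integrable (fun x => Real.exp (g n x - 1)) Q := fun n =>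
      (hr_int.add (integrable_const (Real.exp (-1)))).mono'
        (((hg_meas n).sub measurable_const).exp).aestronglyMeasurable
        (Filter.Eventually.of_forall fun x => by
          rw [Real.norm_eq_abs, abs_of_pos (Real.exp_pos _)]; exact hexp_bdd n x)
    have hrQ : ∫ x, r x ∂Q = 1 := by
      have h := Measure.integral_toReal_rnDeriv hac
      rw [probReal_univ] at h
      exact h
    have hQten : Filter.Tendsto (fun n : ℕ => ∫ x, Real.exp (g n x - 1) ∂Q)
        Filter.atTop (nhds 1) := by
      have h := tendsto_integral_of_dominated_convergence
        (f := fun x => r x) (fun x => r x + Real.exp (-1))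
        (fun n => (((hg_meas n).sub measurable_const).exp).aestronglyMeasurable)
        (hr_int.add (integrable_const _))
        (fun n => Filter.Eventually.of_forall fun x => by
          rw [Real.norm_eq_abs, abs_of_pos (Real.exp_pos _)]; exact hexp_bdd n x)
        (Filter.Eventually.of_forall hexp_tendsto)
      rwa [hrQ] at h
    have hgP_int : ∀ n : ℕ, Integrable (g n) P := fun n =>
      nwj_int_of_bdd (hg_meas n) (hg_bdd n)
    have hvS : ∀ n : ℕ,
        ((∫ x, g n x ∂P - ∫ x, Real.exp (g n x - 1) ∂Q : ℝ) : EReal) ≤ S :=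
      fun n => hle_S (g n) (hg_meas n) n (hg_bdd n)
    by_cases hint : Integrable (llr P Q) P
    · have hPten : Filter.Tendsto (fun n : ℕ => ∫ x, g n x ∂P) Filter.atTop
          (nhds (∫ x, llr P Q x ∂P + 1)) := by
        have h0 : Filter.Tendsto (fun n : ℕ => ∫ x, g n x ∂P) Filter.atTop
            (nhds (∫ x, (llr P Q x + 1) ∂P)) := by
          refine tendsto_integral_of_dominated_convergence (fun x => |llr P Q x| + 1)
            (fun n => (hg_meas n).aestronglyMeasurable)
            (hint.abs.add (integrable_const 1)) (fun n => ?_) ?_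
          · filter_upwards [hr_pos] with x hx
            rw [Real.norm_eq_abs]
            simp only [hg_def, if_neg hx.ne', hllr]
            calc |max (min (Real.log (r x) + 1) (n:ℝ)) (-(n:ℝ))|
                ≤ |Real.log (r x) + 1| := nwj_abs_clamp _ _ (Nat.cast_nonneg n)
              _ ≤ |Real.log (r x)| + 1 := by
                  have h := abs_add_le (Real.log (r x)) 1
                  simpa using h
          · filter_upwards [hr_pos] with x hx
            have hev : ∀ᶠ n : ℕ in Filter.atTop, g n x = llr P Q x + 1 := by
              filter_upwards [Filter.eventually_ge_atTop ⌈|Real.log (r x) + 1|⌉₊] with n hn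
              have hn' : |Real.log (r x) + 1| ≤ (n:ℝ) := Nat.ceil_le.mp hn
              have h1 : Real.log (r x) + 1 ≤ (n:ℝ) := (le_abs_self _).trans hn'
              have h2 : -(n:ℝ) ≤ Real.log (r x) + 1 := by
                have := neg_abs_le (Real.log (r x) + 1); linarith
              simp only [hg_def, if_neg hx.ne', hllr]
              rw [min_eq_left h1, max_eq_left h2]
            exact Filter.Tendsto.congr' (by filter_upwards [hev] with n hn using hn.symm)
              tendsto_const_nhds
        rwa [integral_add hint (integrable_const 1), integral_const, probReal_univ,
          one_smul] at h0
      have hvten : Filter.Tendsto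
          (fun n : ℕ => ∫ x, g n x ∂P - ∫ x, Real.exp (g n x - 1) ∂Q)
          Filter.atTop (nhds (∫ x, llr P Q x ∂P)) := by
        have h := hPten.sub hQten
        simpa using h
      simp only [klDiv]
      rw [if_pos ⟨hac, hint⟩]
      refine le_antisymm ?_ ?_
      · have hco : Filter.Tendsto
            (fun n : ℕ => ((∫ x, g n x ∂P - ∫ x, Real.exp (g n x - 1) ∂Q : ℝ) : EReal))
            Filter.atTop (nhds ((∫ x, llr P Q x ∂P : ℝ) : EReal)) :=
          EReal.tendsto_coe.mpr hvten
        exact le_of_tendsto hco (Filter.Eventually.of_forall hvS)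
      · rw [hS_def]
        refine iSup_le fun T => ?_
        obtain ⟨hTmeas, C, hC⟩ := T.2
        rw [EReal.coe_le_coe_iff]
        have hTint : Integrable T.1 P := nwj_int_of_bdd hTmeas hC
        have hint1 : Integrable (fun x => r x * T.1 x) Q := by
          have h := (integrable_rnDeriv_smul_iff hac).mpr hTint
          exact h
        have hint2 : Integrable (fun x => Real.exp (T.1 x - 1)) Q :=
          nwj_int_of_bdd ((hTmeas.sub measurable_const).exp) (C := Real.exp (C - 1))
            fun x => by
              rw [abs_of_pos (Real.exp_pos _)]
              exact Real.exp_le_exp.mpr (by linarith [(abs_le.mp (hC x)).2])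
        have hint3 : Integrable (fun x => r x * Real.log (r x)) Q := by
          have h := (integrable_rnDeriv_smul_iff hac).mpr hint
          exact h
        have h1 : ∫ x, T.1 x ∂P = ∫ x, r x * T.1 x ∂Q :=
          (integral_rnDeriv_smul hac (f := T.1)).symm
        have h2 : ∫ x, r x * Real.log (r x) ∂Q = ∫ x, llr P Q x ∂P :=
          integral_rnDeriv_smul hac (f := llr P Q)
        calc ∫ x, T.1 x ∂P - ∫ x, Real.exp (T.1 x - 1) ∂Q
            = ∫ x, (r x * T.1 x - Real.exp (T.1 x - 1)) ∂Q := by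
              rw [h1, integral_sub hint1 hint2]
          _ ≤ ∫ x, r x * Real.log (r x) ∂Q := by
              refine integral_mono (hint1.sub hint2) hint3 fun x => ?_
              have h := nwj_conj (hr_nonneg x) (t := T.1 x)
              have hc := mul_comm (r x) (T.1 x)
              dsimp only
              linarith
          _ = ∫ x, llr P Q x ∂P := h2
    · -- P ≪ Q but llr not integrable
      set p : Ω → ℝ := fun x => max (Real.log (r x) + 1) 0 with hp_def
      set q : Ω → ℝ := fun x => max (-(Real.log (r x) + 1)) 0 with hq_def
      have hp_meas : Measurable p := (hr_meas.log.add measurable_const).max measurable_const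
      have hq_meas : Measurable q := ((hr_meas.log.add measurable_const).neg).max measurable_const
      have hp_nonneg : ∀ x, 0 ≤ p x := fun x => le_max_right _ _
      have hq_int : Integrable q P := by
        have hbig : Integrable (fun x => max (-Real.log (r x)) 0) P := by
          refine (integrable_rnDeriv_smul_iff hac).mp ?_
          have h : Integrable (fun x => r x * max (-Real.log (r x)) 0) Q :=
            nwj_int_of_bdd (hr_meas.mul ((hr_meas.log.neg).max measurable_const)) (C := 1)
              fun x => by
                rw [abs_of_nonneg (mul_nonneg (hr_nonneg x) (le_max_right _ _))]
                exact nwj_xlog (hr_nonneg x)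
          exact h
        refine hbig.mono' hq_meas.aestronglyMeasurable (Filter.Eventually.of_forall fun x => ?_)
        rw [Real.norm_eq_abs, abs_of_nonneg (le_max_right _ _)]
        simp only [hq_def]
        exact max_le (le_trans (by linarith) (le_max_left (-Real.log (r x)) 0))
          (le_max_right _ _)
      have hp_not_int : ¬ Integrable p P := by
        intro hp
        apply hint
        have h1 : Integrable (fun x => p x - q x - 1) P :=
          (hp.sub hq_int).sub (integrable_const 1)
        refine h1.congr (Filter.Eventually.of_forall fun x => ?_)
        simp only [hp_def, hq_def, hllr]
        rcases le_total (Real.log (r x) + 1) 0 with h | h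
        · rw [max_eq_right h, max_eq_left (by linarith)]; ring
        · rw [max_eq_left h, max_eq_right (by linarith)]; ring
      have hp_top : ∫⁻ x, ENNReal.ofReal (p x) ∂P = ⊤ := by
        by_contra h
        exact hp_not_int ⟨hp_meas.aestronglyMeasurable,
          (hasFiniteIntegral_iff_ofReal (Filter.Eventually.of_forall hp_nonneg)).mpr
            (lt_top_iff_ne_top.mpr h)⟩
      have hL_ten : Filter.Tendsto (fun n : ℕ => ∫⁻ x, ENNReal.ofReal (min (p x) n) ∂P)
          Filter.atTop (nhds ⊤) := by
        have hmono : ∀ x, Monotone fun n : ℕ => ENNReal.ofReal (min (p x) n) := by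
          intro x n m hnm
          exact ENNReal.ofReal_le_ofReal (min_le_min le_rfl (Nat.cast_le.mpr hnm))
        have htend : ∀ x, Filter.Tendsto (fun n : ℕ => ENNReal.ofReal (min (p x) n))
            Filter.atTop (nhds (ENNReal.ofReal (p x))) := by
          intro x
          have hev : ∀ᶠ n : ℕ in Filter.atTop,
              ENNReal.ofReal (min (p x) n) = ENNReal.ofReal (p x) := by
            filter_upwards [Filter.eventually_ge_atTop ⌈p x⌉₊] with n hn
            rw [min_eq_left ((Nat.le_ceil _).trans (Nat.cast_le.mpr hn))]
          exact Filter.Tendsto.congr' (by filter_upwards [hev] with n hn using hn.symm)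
            tendsto_const_nhds
        have h := lintegral_tendsto_of_tendsto_of_monotone (μ := P)
          (fun n => ((hp_meas.min measurable_const).ennreal_ofReal).aemeasurable)
          (Filter.Eventually.of_forall hmono) (Filter.Eventually.of_forall htend)
        rwa [hp_top] at h
      have hL_ne : ∀ n : ℕ, (∫⁻ x, ENNReal.ofReal (min (p x) n) ∂P) ≠ ⊤ := by
        intro n
        have h1 : (∫⁻ x, ENNReal.ofReal (min (p x) n) ∂P) ≤ ∫⁻ _, ENNReal.ofReal n ∂P :=
          lintegral_mono fun x => ENNReal.ofReal_le_ofReal (min_le_right _ _)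
        rw [lintegral_const, measure_univ, mul_one] at h1
        exact (h1.trans_lt ENNReal.ofReal_lt_top).ne
      have hIn_eq : ∀ n : ℕ, ∫ x, min (p x) n ∂P
          = (∫⁻ x, ENNReal.ofReal (min (p x) n) ∂P).toReal := fun n =>
        integral_eq_lintegral_of_nonneg_ae
          (Filter.Eventually.of_forall fun x => le_min (hp_nonneg x) (Nat.cast_nonneg n))
          (hp_meas.min measurable_const).aestronglyMeasurable
      have hIn_ten : Filter.Tendsto (fun n : ℕ => ∫ x, min (p x) n ∂P)
          Filter.atTop Filter.atTop := by
        rw [Filter.tendsto_atTop]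
        intro M
        filter_upwards [hL_ten.eventually (Ioi_mem_nhds
          (show ENNReal.ofReal M < ⊤ from ENNReal.ofReal_lt_top))] with n hn
        rw [hIn_eq n]
        exact (ENNReal.ofReal_le_iff_le_toReal (hL_ne n)).mp (Set.mem_Ioi.mp hn).le
      have hmin_int : ∀ n : ℕ, Integrable (fun x => min (p x) n) P := fun n =>
        nwj_int_of_bdd (hp_meas.min measurable_const) (C := n) fun x => by
          have h0 := le_min (hp_nonneg x) (Nat.cast_nonneg (α := ℝ) n)
          have h1 : (0:ℝ) ≤ n := Nat.cast_nonneg n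
          exact abs_le.mpr ⟨by linarith, min_le_right _ _⟩
      have hgP_ge : ∀ n : ℕ, ∫ x, min (p x) n ∂P - ∫ x, q x ∂P ≤ ∫ x, g n x ∂P := by
        intro n
        rw [← integral_sub (hmin_int n) hq_int]
        refine integral_mono_ae ((hmin_int n).sub hq_int) (hgP_int n) ?_
        filter_upwards [hr_pos] with x hx
        simp only [hg_def, hp_def, hq_def, if_neg hx.ne']
        exact nwj_clamp_ge (Nat.cast_nonneg n)
      have hexpQ_le : ∀ n : ℕ, ∫ x, Real.exp (g n x - 1) ∂Q ≤ 1 + Real.exp (-1) := by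
        intro n
        have h1 : ∫ x, Real.exp (g n x - 1) ∂Q ≤ ∫ x, (r x + Real.exp (-1)) ∂Q :=
          integral_mono (hexpQ_int n) (hr_int.add (integrable_const _)) (hexp_bdd n)
        rwa [integral_add hr_int (integrable_const _), integral_const, probReal_univ,
          one_smul, hrQ] at h1
      have hv_top : Filter.Tendsto
          (fun n : ℕ => ∫ x, g n x ∂P - ∫ x, Real.exp (g n x - 1) ∂Q)
          Filter.atTop Filter.atTop := by
        have hf : Filter.Tendsto
            (fun n : ℕ => ∫ x, min (p x) n ∂P + (-(∫ x, q x ∂P) - (1 + Real.exp (-1))))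
            Filter.atTop Filter.atTop :=
          Filter.tendsto_atTop_add_const_right _ _ hIn_ten
        refine Filter.tendsto_atTop_mono' Filter.atTop
          (Filter.Eventually.of_forall fun n => ?_) hf
        have h1 := hgP_ge n
        have h2 := hexpQ_le n
        dsimp only
        linarith
      simp only [klDiv]
      rw [if_neg (fun h => hint h.2)]
      exact (nwj_top hv_top hvS).symm
  · have hs : ∃ s, Q s = 0 ∧ P s ≠ 0 := by
      by_contra h
      push_neg at h
      exact hac fun s hs => h s hs
    obtain ⟨s, hQs, hPs⟩ := hs
    have ht_meas : MeasurableSet (toMeasurable Q s) := measurableSet_toMeasurable Q s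
    have hQt : Q (toMeasurable Q s) = 0 := by rw [measure_toMeasurable]; exact hQs
    have hPt : P (toMeasurable Q s) ≠ 0 := fun h =>
      hPs (le_antisymm (le_trans (measure_mono (subset_toMeasurable Q s)) h.le) zero_le)
    have hpos : 0 < (P (toMeasurable Q s)).toReal :=
      ENNReal.toReal_pos hPt (measure_ne_top P _)
    set T : ℕ → Ω → ℝ := fun n => (toMeasurable Q s).indicator (fun _ => (n : ℝ)) with hT_def
    have hT_meas : ∀ n, Measurable (T n) := fun n => measurable_const.indicator ht_meas
    have hT_bdd : ∀ (n : ℕ) (x : Ω), |T n x| ≤ (n : ℝ) := by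
      intro n x
      simp only [hT_def]
      by_cases h : x ∈ toMeasurable Q s
      · rw [Set.indicator_of_mem h, abs_of_nonneg (Nat.cast_nonneg n)]
      · rw [Set.indicator_of_notMem h]
        simpa using (Nat.cast_nonneg n : (0:ℝ) ≤ n)
    have hval : ∀ n : ℕ, ∫ x, T n x ∂P - ∫ x, Real.exp (T n x - 1) ∂Q
        = (P (toMeasurable Q s)).toReal * n - Real.exp (-1) := by
      intro n
      have h1 : ∫ x, T n x ∂P = (P (toMeasurable Q s)).toReal * n := by
        simp only [hT_def]
        rw [integral_indicator_const _ ht_meas, smul_eq_mul, measureReal_def]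
      have h2 : ∫ x, Real.exp (T n x - 1) ∂Q = Real.exp (-1) := by
        have he : (fun x => Real.exp (T n x - 1)) =ᵐ[Q] fun _ => Real.exp (-1) := by
          filter_upwards [measure_eq_zero_iff_ae_notMem.mp hQt] with x hx
          simp only [hT_def]
          rw [Set.indicator_of_notMem hx]
          norm_num
        rw [integral_congr_ae he, integral_const, probReal_univ, one_smul]
      rw [h1, h2]
    have hvS : ∀ n : ℕ,
        (((P (toMeasurable Q s)).toReal * n - Real.exp (-1) : ℝ) : EReal) ≤ S := by
      intro n
      rw [← hval n]
      exact hle_S (T n) (hT_meas n) n (hT_bdd n)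
    have hv_top : Filter.Tendsto
        (fun n : ℕ => (P (toMeasurable Q s)).toReal * n - Real.exp (-1))
        Filter.atTop Filter.atTop := by
      have h3 : Filter.Tendsto (fun n : ℕ => (P (toMeasurable Q s)).toReal * n)
          Filter.atTop Filter.atTop :=
        Filter.Tendsto.const_mul_atTop hpos tendsto_natCast_atTop_atTop
      exact Filter.Tendsto.congr (fun n => by ring)
        (Filter.tendsto_atTop_add_const_right _ (-Real.exp (-1)) h3)
    simp only [klDiv]
    rw [if_neg (fun h => hac h.1)]
    exact (nwj_top hv_top hvS).symm
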